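/- For the extraction-contraction coproduct Δ⁻ on decorated forests defined by Δ⁻(T,𝔫,𝔢) = ∑_{A⊂T} ∑_{𝔢_A,𝔫_A} (1/𝔢_A!) binom(𝔫,𝔫_A) (A, 𝔫_A+π𝔢_A, 𝔢↾E_A) ⊗ (R_A T, R_A(𝔫-𝔫_A), 𝔢+𝔢_A), where the outer sum ranges over subforests A of T and R_A contracts the connected components of A: the sum is finite after projecting the left factor to T_- (the quotient by the ideal generated by trees of nonnegative degree), because for each fixed subforest A only finitely many choices of (𝔫_A, 𝔢_A) yield a left factor of negative degree. -/

import Mathlib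

open scoped BigOperators Classical

/-- Parabolic size `|k| = 2k₀ + k₁` of a decoration `k ∈ ℕ²`. -/
def decDeg (k : ℕ × ℕ) : ℝ := 2 * k.1 + k.2

/-- In the extraction–contraction coproduct `Δ⁻` on decorated forests,
fix a subforest `A` of a decorated tree `(T,𝔫,𝔢)`; let `VA` be its vertex set, `DA` the
set of edges of `T∖A` adjacent to `A` (with attachment map `att : DA → VA`), and let
`edgeDeg` be the (fixed) total degree of the edges of `A` (together with the restricted
edge decoration `𝔢↾E_A`).  The extracted term `(A, 𝔫_A + π𝔢_A, 𝔢↾E_A)` then has degree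
`edgeDeg + ∑_v |𝔫_A(v) + (π𝔢_A)(v)|`.  Only finitely many choices of
`(𝔫_A, 𝔢_A)` with `𝔫_A ≤ 𝔫` produce an extracted factor of negative degree; hence after
projecting the left factor to `T₋` the sum defining `Δ⁻` is finite. -/
theorem stmt18 {VA DA : Type} [Fintype VA] [Fintype DA]
    (edgeDeg : ℝ) (att : DA → VA) (𝔫 : VA → ℕ × ℕ) :
    {p : (VA → ℕ × ℕ) × (DA → ℕ × ℕ) |
      (∀ v, p.1 v ≤ 𝔫 v) ∧
      edgeDeg + ∑ v : VA,
          decDeg (p.1 v + ∑ e : DA, if att e = v then p.2 e else 0) < 0}.Finite := by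
  obtain ⟨N, hN⟩ := exists_nat_gt (-edgeDeg)
  apply Set.Finite.subset (Set.finite_Icc
    (⟨fun _ => 0, fun _ => 0⟩ : (VA → ℕ × ℕ) × (DA → ℕ × ℕ))
    ⟨𝔫, fun _ => (N, N)⟩)
  rintro ⟨f, g⟩ ⟨h1, h2⟩
  have hterm : ∀ x, (0:ℝ) ≤ decDeg x := fun x => by unfold decDeg; positivity
  have hS : ∑ v : VA, decDeg (f v + ∑ e : DA, if att e = v then g e else 0) < N := by
    linarith
  have key : ∀ e : DA, g e ≤ (N, N) := by
    intro e
    have h3 : decDeg (f (att e) + ∑ e' : DA, if att e' = att e then g e' else 0) ≤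
        ∑ v : VA, decDeg (f v + ∑ e' : DA, if att e' = v then g e' else 0) :=
      Finset.single_le_sum (f := fun v => decDeg (f v + ∑ e' : DA, if att e' = v then g e' else 0)) (fun v _ => hterm _) (Finset.mem_univ (att e))
    have h4 : g e ≤ ∑ e' : DA, if att e' = att e then g e' else 0 := by
      have := Finset.single_le_sum
        (f := fun e' => if att e' = att e then g e' else 0)
        (fun i _ => zero_le) (Finset.mem_univ e)
      simpa using this
    have h5 : g e ≤ f (att e) + ∑ e' : DA, if att e' = att e then g e' else 0 :=
      le_trans h4 (le_add_of_nonneg_left (zero_le))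
    set X := f (att e) + ∑ e' : DA, if att e' = att e then g e' else 0 with hX
    have hX1 : (g e).1 ≤ X.1 := h5.1
    have hX2 : (g e).2 ≤ X.2 := h5.2
    have hd : decDeg X < N := lt_of_le_of_lt h3 hS
    have hd1 : ((g e).1 : ℝ) < N := by
      have : ((g e).1 : ℝ) ≤ (X.1 : ℝ) := by exact_mod_cast hX1
      unfold decDeg at hd; linarith
    have hd2 : ((g e).2 : ℝ) < N := by
      have : ((g e).2 : ℝ) ≤ (X.2 : ℝ) := by exact_mod_cast hX2
      unfold decDeg at hd; linarith
    exact ⟨le_of_lt (by exact_mod_cast hd1), le_of_lt (by exact_mod_cast hd2)⟩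
  exact ⟨⟨fun v => zero_le, fun e => zero_le⟩, ⟨h1, key⟩⟩
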